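/- Let Ω ⊂ ℝ³ be a bounded open set and let w : Ω → ℝ³ be a C¹ vector field vanishing on ∂Ω. For i ∈ {1,2,3} let φ_i(x) = x × e_i, where e_i is the i-th standard basis vector. Then c(w, w, φ_i) = 2∫_Ω (D(w)w)·φ_i dx + ∫_Ω (div w)(w·φ_i) dx = 0, even if div w ≠ 0. -/

import Mathlib

open Real MeasureTheory

/-- `(∇u)_{ij} = ∂_j u_i` : entry of the Jacobian of a vector field. -/
noncomputable def gradEntry {d : ℕ} (u : (Fin d → ℝ) → Fin d → ℝ) (i j : Fin d)
    (x : Fin d → ℝ) : ℝ := fderiv ℝ (fun y => u y i) x (Pi.single j 1)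

/-- divergence of a vector field. -/
noncomputable def divg {d : ℕ} (u : (Fin d → ℝ) → Fin d → ℝ) (x : Fin d → ℝ) : ℝ :=
  ∑ j, gradEntry u j j x

/-- `D(u)_{ij}`, the symmetric part of the Jacobian. -/
noncomputable def symGrad {d : ℕ} (u : (Fin d → ℝ) → Fin d → ℝ) (i j : Fin d)
    (x : Fin d → ℝ) : ℝ := (1/2) * (gradEntry u i j x + gradEntry u j i x)

/-- The EMAC trilinear form `c(u,v,w) = 2∫_Ω (D(u)v)·w + ∫_Ω (div u)(v·w)`. -/
noncomputable def emacC {d : ℕ} (Ω : Set (Fin d → ℝ))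
    (u v w : (Fin d → ℝ) → Fin d → ℝ) : ℝ :=
  2 * (∫ x in Ω, ∑ i, (∑ j, symGrad u i j x * v x j) * w x i)
    + ∫ x in Ω, divg u x * ∑ i, v x i * w x i

/- ## Auxiliary material -/

noncomputable def phiL (e : Fin 3 → ℝ) : (Fin 3 → ℝ) →L[ℝ] (Fin 3 → ℝ) :=
  LinearMap.toContinuousLinearMap ((crossProduct (R := ℝ)).flip e)

lemma phiL_apply (e v : Fin 3 → ℝ) : phiL e v = crossProduct v e := rfl

lemma hasFDerivAt_comp_proj {f : (Fin 3 → ℝ) → Fin 3 → ℝ} {x : Fin 3 → ℝ}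
    {f' : (Fin 3 → ℝ) →L[ℝ] Fin 3 → ℝ} (h : HasFDerivAt f f' x) (j : Fin 3) :
    HasFDerivAt (fun y => f y j) ((ContinuousLinearMap.proj j).comp f') x := by
  exact ((ContinuousLinearMap.proj (R := ℝ) (φ := fun _ : Fin 3 => ℝ) j).hasFDerivAt
    (x := f x)).comp x h

/-- the flux field `F_j = w_j (w·φ) + (1/2)|w|² φ_j` with `φ y = y × e`. -/
noncomputable def Fv (w : (Fin 3 → ℝ) → Fin 3 → ℝ) (e : Fin 3 → ℝ) (y : Fin 3 → ℝ) :
    Fin 3 → ℝ := fun j =>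
  w y j * (∑ k, w y k * crossProduct y e k)
    + (1/2) * ((∑ k, w y k * w y k) * crossProduct y e j)

lemma hwj {w : (Fin 3 → ℝ) → Fin 3 → ℝ} (hw : ContDiff ℝ 1 w) (x : Fin 3 → ℝ) (j : Fin 3) :
    HasFDerivAt (fun y => w y j)
      ((ContinuousLinearMap.proj j).comp (fderiv ℝ w x)) x :=
  hasFDerivAt_comp_proj (hw.differentiable one_ne_zero x).hasFDerivAt j

lemma hphij (e : Fin 3 → ℝ) (x : Fin 3 → ℝ) (j : Fin 3) :
    HasFDerivAt (fun y => crossProduct y e j)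
      ((ContinuousLinearMap.proj j).comp (phiL e)) x :=
  hasFDerivAt_comp_proj ((phiL e).hasFDerivAt) j

lemma gradEntry_eq {w : (Fin 3 → ℝ) → Fin 3 → ℝ} (hw : ContDiff ℝ 1 w) (x : Fin 3 → ℝ)
    (j m : Fin 3) : gradEntry w j m x = fderiv ℝ w x (Pi.single m 1) j := by
  rw [gradEntry, (hwj hw x j).fderiv]; rfl

lemma hasF {w : (Fin 3 → ℝ) → Fin 3 → ℝ} (hw : ContDiff ℝ 1 w) (e : Fin 3 → ℝ)
    (x : Fin 3 → ℝ) (j : Fin 3) : HasFDerivAt (fun y => Fv w e y j)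
    ((w x j • (∑ k : Fin 3, (w x k • ((ContinuousLinearMap.proj k).comp (phiL e))
        + crossProduct x e k • ((ContinuousLinearMap.proj k).comp (fderiv ℝ w x))))
      + (∑ k : Fin 3, w x k * crossProduct x e k) • ((ContinuousLinearMap.proj j).comp (fderiv ℝ w x)))
     + ((1:ℝ)/2) • (((∑ k : Fin 3, w x k * w x k) • ((ContinuousLinearMap.proj j).comp (phiL e)))
        + crossProduct x e j • (∑ k : Fin 3, (w x k • ((ContinuousLinearMap.proj k).comp (fderiv ℝ w x))
            + w x k • ((ContinuousLinearMap.proj k).comp (fderiv ℝ w x)))))) x := by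
  have hS : HasFDerivAt (fun y => ∑ k : Fin 3, w y k * crossProduct y e k)
      (∑ k : Fin 3, (w x k • ((ContinuousLinearMap.proj k).comp (phiL e))
        + crossProduct x e k • ((ContinuousLinearMap.proj k).comp (fderiv ℝ w x)))) x :=
    HasFDerivAt.fun_sum (fun k _ => (hwj hw x k).mul (hphij e x k))
  have hQ : HasFDerivAt (fun y => ∑ k : Fin 3, w y k * w y k)
      (∑ k : Fin 3, (w x k • ((ContinuousLinearMap.proj k).comp (fderiv ℝ w x))
        + w x k • ((ContinuousLinearMap.proj k).comp (fderiv ℝ w x)))) x :=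
    HasFDerivAt.fun_sum (fun k _ => (hwj hw x k).mul (hwj hw x k))
  exact ((hwj hw x j).mul hS).add (((hQ.mul (hphij e x j))).const_mul (1/2))

set_option maxHeartbeats 4000000 in
/-- pointwise divergence identity: `div F = 2 (D(w)w)·φ + (div w)(w·φ)`. -/
lemma div_identity {w : (Fin 3 → ℝ) → Fin 3 → ℝ} (hw : ContDiff ℝ 1 w) (e : Fin 3 → ℝ)
    (x : Fin 3 → ℝ) :
    ∑ j : Fin 3, fderiv ℝ (fun y => Fv w e y j) x (Pi.single j 1)
      = 2 * ∑ a : Fin 3, (∑ b : Fin 3, symGrad w a b x * w x b) * crossProduct x e a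
        + divg w x * ∑ a : Fin 3, w x a * crossProduct x e a := by
  rw [Fin.sum_univ_three, (hasF hw e x 0).fderiv, (hasF hw e x 1).fderiv,
    (hasF hw e x 2).fderiv]
  simp only [symGrad, divg, gradEntry_eq hw, ContinuousLinearMap.add_apply,
    ContinuousLinearMap.smul_apply, ContinuousLinearMap.coe_sum', Finset.sum_apply,
    ContinuousLinearMap.coe_comp', Function.comp_apply, ContinuousLinearMap.proj_apply,
    phiL_apply, smul_eq_mul]
  simp only [Fin.sum_univ_three, cross_apply, Pi.single_apply]
  simp only [show ((0:Fin 3) = 1) = False by simp, show ((0:Fin 3) = 2) = False by simp,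
    show ((1:Fin 3) = 0) = False by simp, show ((1:Fin 3) = 2) = False by simp,
    show ((2:Fin 3) = 0) = False by simp, show ((2:Fin 3) = 1) = False by simp,
    show ((0:Fin 3) = 0) = True by simp, show ((1:Fin 3) = 1) = True by simp,
    show ((2:Fin 3) = 2) = True by simp, if_true, if_false, Matrix.cons_val_zero,
    Matrix.cons_val_one, Matrix.head_cons, Matrix.cons_val_two, Matrix.tail_cons]
  ring

/-- a function dominated quadratically near `x` has zero derivative at `x`. -/
lemma hasFDerivAt_zero_of_quad {E F : Type*} [NormedAddCommGroup E] [NormedSpace ℝ E]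
    [NormedAddCommGroup F] [NormedSpace ℝ F] {f : E → F} {x : E} {C : ℝ}
    (h : ∀ᶠ y in nhds x, ‖f y‖ ≤ C * (‖y - x‖ * ‖y - x‖)) :
    HasFDerivAt f (0 : E →L[ℝ] F) x := by
  have hfx : f x = 0 := by
    have h0 := h.self_of_nhds
    simp only [sub_self, norm_zero, mul_zero] at h0
    exact norm_le_zero_iff.1 h0
  rw [hasFDerivAt_iff_isLittleO]
  simp only [hfx, ContinuousLinearMap.zero_apply, sub_zero]
  have h1 : (fun y => f y) =O[nhds x] fun y => ‖y - x‖ * ‖y - x‖ := by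
    rw [Asymptotics.isBigO_iff]
    refine ⟨C, ?_⟩
    filter_upwards [h] with y hy
    rwa [Real.norm_eq_abs, abs_of_nonneg (mul_nonneg (norm_nonneg _) (norm_nonneg _))]
  have h2 : (fun y : E => ‖y - x‖ * ‖y - x‖) =o[nhds x] fun y => y - x := by
    rw [Asymptotics.isLittleO_iff]
    intro c hc
    filter_upwards [Metric.ball_mem_nhds x hc] with y hy
    rw [Metric.mem_ball, dist_eq_norm] at hy
    rw [Real.norm_eq_abs, abs_of_nonneg (mul_nonneg (norm_nonneg _) (norm_nonneg _))]
    exact mul_le_mul_of_nonneg_right hy.le (norm_nonneg _)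
  exact h1.trans_isLittleO h2

/-- at a boundary point where `w` vanishes, the cut-off flux has zero derivative. -/
lemma frontier_deriv {w : (Fin 3 → ℝ) → Fin 3 → ℝ} (hw : ContDiff ℝ 1 w) (e : Fin 3 → ℝ)
    {Ω : Set (Fin 3 → ℝ)} {x : Fin 3 → ℝ} (hx : x ∉ Ω) (hwx : w x = 0) :
    HasFDerivAt (Ω.indicator (Fv w e)) (0 : (Fin 3 → ℝ) →L[ℝ] (Fin 3 → ℝ)) x := by
  obtain ⟨K, t, ht, hK⟩ := (hw.contDiffAt).exists_lipschitzOnWith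
  set M : ℝ := ‖crossProduct x e‖ + 1 with hM
  have hM0 : 0 ≤ M := by positivity
  have hMev : ∀ᶠ y in nhds x, ‖crossProduct y e‖ ≤ M := by
    have hc : ContinuousAt (fun y : Fin 3 → ℝ => ‖crossProduct y e‖) x :=
      ((phiL e).continuous.norm.continuousAt)
    have : ∀ᶠ y in nhds x, ‖crossProduct y e‖ < M :=
      hc.eventually_lt_const (by rw [hM]; exact lt_add_one _)
    exact this.mono fun y hy => hy.le
  have hwev : ∀ᶠ y in nhds x, ‖w y‖ ≤ (K : ℝ) * ‖y - x‖ := by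
    filter_upwards [ht] with y hy
    have hxt : x ∈ t := mem_of_mem_nhds ht
    have := hK.dist_le_mul y hy x hxt
    rwa [dist_eq_norm, dist_eq_norm, hwx, sub_zero] at this
  apply hasFDerivAt_zero_of_quad (C := (9/2) * M * ((K:ℝ) * (K:ℝ)))
  filter_upwards [hMev, hwev] with y hy1 hy2
  by_cases hyΩ : y ∈ Ω
  · rw [Set.indicator_of_mem hyΩ]
    have hA0 : (0:ℝ) ≤ ‖w y‖ := norm_nonneg _
    have hcompbd : ∀ j, |Fv w e y j| ≤ (9/2) * M * (‖w y‖ * ‖w y‖) := by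
      intro j
      have h1 : ∀ k, |w y k| ≤ ‖w y‖ := fun k => norm_le_pi_norm (w y) k
      have h2 : ∀ k, |crossProduct y e k| ≤ M := fun k =>
        (norm_le_pi_norm (crossProduct y e) k).trans hy1
      have hSb : |∑ k : Fin 3, w y k * crossProduct y e k| ≤ 3 * (‖w y‖ * M) := by
        refine (Finset.abs_sum_le_sum_abs _ _).trans ?_
        rw [Fin.sum_univ_three]
        have b0 := mul_le_mul (h1 0) (h2 0) (abs_nonneg _) hA0
        have b1 := mul_le_mul (h1 1) (h2 1) (abs_nonneg _) hA0
        have b2 := mul_le_mul (h1 2) (h2 2) (abs_nonneg _) hA0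
        simp only [abs_mul]
        linarith
      have hQb : |∑ k : Fin 3, w y k * w y k| ≤ 3 * (‖w y‖ * ‖w y‖) := by
        refine (Finset.abs_sum_le_sum_abs _ _).trans ?_
        rw [Fin.sum_univ_three]
        have b0 := mul_le_mul (h1 0) (h1 0) (abs_nonneg _) hA0
        have b1 := mul_le_mul (h1 1) (h1 1) (abs_nonneg _) hA0
        have b2 := mul_le_mul (h1 2) (h1 2) (abs_nonneg _) hA0
        simp only [abs_mul]
        linarith
      calc |Fv w e y j|
          ≤ |w y j| * |∑ k : Fin 3, w y k * crossProduct y e k|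
            + (1/2) * (|∑ k : Fin 3, w y k * w y k| * |crossProduct y e j|) := by
            rw [Fv]
            refine (abs_add_le _ _).trans ?_
            rw [abs_mul, abs_mul, abs_mul, abs_of_nonneg (by norm_num : (0:ℝ) ≤ 1/2)]
        _ ≤ ‖w y‖ * (3 * (‖w y‖ * M)) + (1/2) * ((3 * (‖w y‖ * ‖w y‖)) * M) := by
            gcongr <;> first
              | exact h1 j | exact h2 j | exact hSb | exact hQb | positivity
        _ = (9/2) * M * (‖w y‖ * ‖w y‖) := by ring
    have hyn : ‖w y‖ * ‖w y‖ ≤ ((K:ℝ) * ‖y - x‖) * ((K:ℝ) * ‖y - x‖) :=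
      mul_le_mul hy2 hy2 hA0 (le_trans hA0 hy2)
    rw [pi_norm_le_iff_of_nonneg (by positivity)]
    intro j
    calc ‖Fv w e y j‖ = |Fv w e y j| := rfl
      _ ≤ (9/2) * M * (‖w y‖ * ‖w y‖) := hcompbd j
      _ ≤ (9/2) * M * (((K:ℝ) * ‖y - x‖) * ((K:ℝ) * ‖y - x‖)) :=
          mul_le_mul_of_nonneg_left hyn (by positivity)
      _ = (9/2) * M * ((K:ℝ) * (K:ℝ)) * (‖y - x‖ * ‖y - x‖) := by ring
  · rw [Set.indicator_of_notMem hyΩ]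
    simp only [norm_zero]
    positivity

/-- Angular momentum conservation of the EMAC nonlinearity: for `φ_i(x) = x × e_i`,
`c(w, w, φ_i) = 0` even when `div w ≠ 0`, for `w` a C¹ field vanishing on `∂Ω`. -/
theorem stmt6 (Ω : Set (Fin 3 → ℝ)) (hΩo : IsOpen Ω)
    (hΩb : Bornology.IsBounded Ω)
    (w : (Fin 3 → ℝ) → Fin 3 → ℝ) (hw : ContDiff ℝ 1 w)
    (hwb : ∀ x ∈ frontier Ω, w x = 0) (i : Fin 3) :
    emacC Ω w w (fun x => crossProduct x (Pi.single i (1 : ℝ))) = 0 := by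
  classical
  set e : Fin 3 → ℝ := Pi.single i 1 with he
  -- continuity helpers
  have hcw : ∀ j, Continuous fun x => w x j := fun j => (continuous_apply j).comp hw.continuous
  have hcφ : ∀ j, Continuous fun x : Fin 3 → ℝ => crossProduct x e j :=
    fun j => (continuous_apply j).comp (phiL e).continuous
  have hcg : ∀ a b : Fin 3, Continuous fun x => gradEntry w a b x := by
    intro a b
    have h1 : Continuous (fderiv ℝ w) := hw.continuous_fderiv one_ne_zero
    have h2 : (fun x => gradEntry w a b x) = fun x => fderiv ℝ w x (Pi.single b 1) a :=
      funext fun x => gradEntry_eq hw x a b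
    rw [h2]
    exact (continuous_apply a).comp (h1.clm_apply continuous_const)
  have hcA : Continuous fun x =>
      ∑ a : Fin 3, (∑ b : Fin 3, symGrad w a b x * w x b) * crossProduct x e a := by
    refine continuous_finset_sum _ fun a _ => Continuous.mul ?_ (hcφ a)
    refine continuous_finset_sum _ fun b _ => Continuous.mul ?_ (hcw b)
    exact continuous_const.mul ((hcg a b).add (hcg b a))
  have hcB : Continuous fun x => divg w x * ∑ a : Fin 3, w x a * crossProduct x e a := by
    refine Continuous.mul ?_ (continuous_finset_sum _ fun a _ => (hcw a).mul (hcφ a))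
    exact continuous_finset_sum _ fun a _ => hcg a a
  -- integrability on Ω
  have hcomp : IsCompact (closure Ω) := hΩb.isCompact_closure
  have hInt : ∀ {f : (Fin 3 → ℝ) → ℝ}, Continuous f → IntegrableOn f Ω := fun hf =>
    ((hf.continuousOn).integrableOn_compact hcomp).mono_set subset_closure
  -- the divergence of the flux field
  set divF : (Fin 3 → ℝ) → ℝ :=
    fun x => ∑ j : Fin 3, fderiv ℝ (fun y => Fv w e y j) x (Pi.single j 1) with hdivF
  have hcdivF : Continuous divF := by
    have : divF = fun x =>
        2 * ∑ a : Fin 3, (∑ b : Fin 3, symGrad w a b x * w x b) * crossProduct x e a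
          + divg w x * ∑ a : Fin 3, w x a * crossProduct x e a :=
      funext fun x => div_identity hw e x
    rw [this]
    exact (continuous_const.mul hcA).add hcB
  -- reduce to ∫_Ω divF = 0
  have hstep1 : emacC Ω w w (fun x => crossProduct x e) = ∫ x in Ω, divF x := by
    rw [emacC, ← integral_const_mul, ← integral_add ((hInt hcA).const_mul 2) (hInt hcB)]
    exact setIntegral_congr_fun hΩo.measurableSet fun x _ => (div_identity hw e x).symm
  rw [hstep1]
  -- the big box
  obtain ⟨R, hR⟩ := (Metric.isBounded_iff_subset_closedBall 0).1 hΩb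
  set R' : ℝ := max R 0 with hR'def
  have hR' : Ω ⊆ Metric.closedBall 0 R' :=
    hR.trans (Metric.closedBall_subset_closedBall (le_max_left _ _))
  set a : Fin 3 → ℝ := fun _ => -(R' + 1) with ha
  set b : Fin 3 → ℝ := fun _ => R' + 1 with hb
  have hR'0 : (0:ℝ) ≤ R' := le_max_right _ _
  have hle : a ≤ b := fun j => by
    simp only [ha, hb]
    linarith
  have hnorm : ∀ x ∈ Ω, ‖x‖ ≤ R' := fun x hx => by
    have := hR' hx
    rwa [Metric.mem_closedBall, dist_zero_right] at this
  have hΩIcc : Ω ⊆ Set.Icc a b := by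
    intro x hx
    have hx' : ‖x‖ ≤ R' := hnorm x hx
    constructor <;> intro j <;>
      have hj : |x j| ≤ R' := (norm_le_pi_norm x j).trans hx'
    · have := (abs_le.1 hj).1
      simp only [ha]
      linarith
    · have := (abs_le.1 hj).2
      simp only [hb]
      linarith
  have hnot : ∀ y : Fin 3 → ℝ, (∃ j, |y j| = R' + 1) → y ∉ Ω := by
    rintro y ⟨j, hj⟩ hy
    have := (norm_le_pi_norm y j).trans (hnorm y hy)
    rw [Real.norm_eq_abs, hj] at this
    linarith
  -- the cut-off flux and its derivative
  set G : (Fin 3 → ℝ) → Fin 3 → ℝ := Ω.indicator (Fv w e) with hG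
  set f' : (Fin 3 → ℝ) → (Fin 3 → ℝ) →L[ℝ] (Fin 3 → ℝ) := fun x =>
    if x ∈ Ω then ContinuousLinearMap.pi (fun j => fderiv ℝ (fun y => Fv w e y j) x)
    else 0 with hf'
  have hGd : ∀ x, HasFDerivAt G (f' x) x := by
    intro x
    by_cases hx : x ∈ Ω
    · rw [hf']
      simp only [if_pos hx]
      have hFd : HasFDerivAt (Fv w e)
          (ContinuousLinearMap.pi (fun j => fderiv ℝ (fun y => Fv w e y j) x)) x := by
        apply hasFDerivAt_pi.2
        intro j
        exact (hasF hw e x j).differentiableAt.hasFDerivAt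
      refine hFd.congr_of_eventuallyEq ?_
      filter_upwards [hΩo.mem_nhds hx] with y hy
      exact Set.indicator_of_mem hy _
    · by_cases hx2 : x ∈ closure Ω
      · rw [hf']
        simp only [if_neg hx]
        have hfr : x ∈ frontier Ω := by
          rw [frontier, hΩo.interior_eq]
          exact ⟨hx2, hx⟩
        exact frontier_deriv hw e hx (hwb x hfr)
      · rw [hf']
        simp only [if_neg hx]
        have hop : IsOpen (closure Ω)ᶜ := isClosed_closure.isOpen_compl
        refine (hasFDerivAt_const (0 : Fin 3 → ℝ) x).congr_of_eventuallyEq ?_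
        filter_upwards [hop.mem_nhds hx2] with y hy
        exact Set.indicator_of_notMem (fun hmem => hy (subset_closure hmem)) _
  have hGc : Continuous G := continuous_iff_continuousAt.2 fun x => (hGd x).continuousAt
  -- identify the box divergence with the indicator of divF
  have hsum : (fun x => ∑ j : Fin 3, f' x (Pi.single j 1) j) = Ω.indicator divF := by
    funext x
    by_cases hx : x ∈ Ω
    · simp only [hf', if_pos hx, ContinuousLinearMap.pi_apply, Set.indicator_of_mem hx, hdivF]
    · simp only [hf', if_neg hx, Set.indicator_of_notMem hx, ContinuousLinearMap.zero_apply]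
      simp
  have Hi : IntegrableOn (fun x => ∑ j : Fin 3, f' x (Pi.single j 1) j) (Set.Icc a b) := by
    rw [hsum]
    exact (hcdivF.continuousOn.integrableOn_compact isCompact_Icc).indicator hΩo.measurableSet
  -- divergence theorem
  have hdiv := MeasureTheory.integral_divergence_of_hasFDerivAt_off_countable
    (n := 2) a b hle G f' ∅ Set.countable_empty hGc.continuousOn
    (fun x _ => hGd x) Hi
  -- the faces vanish
  have hfaces : ∀ (j : Fin 3) (c : ℝ), |c| = R' + 1 →
      ∀ y : Fin 2 → ℝ, G (Fin.insertNth j c y) j = 0 := by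
    intro j c hc y
    have : Fin.insertNth j c y ∉ Ω := hnot _ ⟨j, by rw [Fin.insertNth_apply_same]; exact hc⟩
    simp [hG, Set.indicator_of_notMem this]
  have hrhs : (∑ j : Fin 3,
      ((∫ x in Set.Icc (a ∘ j.succAbove) (b ∘ j.succAbove), G (j.insertNth (b j) x) j)
        - ∫ x in Set.Icc (a ∘ j.succAbove) (b ∘ j.succAbove), G (j.insertNth (a j) x) j)) = 0 := by
    refine Finset.sum_eq_zero fun j _ => ?_
    have h1 : ∀ y : Fin 2 → ℝ, G (j.insertNth (b j) y) j = 0 :=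
      hfaces j (b j) (by simp only [hb]; rw [abs_of_nonneg (by linarith)])
    have h2 : ∀ y : Fin 2 → ℝ, G (j.insertNth (a j) y) j = 0 :=
      hfaces j (a j) (by simp only [ha]; rw [abs_neg, abs_of_nonneg (by linarith)])
    simp only [h1, h2, integral_zero, sub_zero]
  rw [hrhs] at hdiv
  -- conclude
  rw [hsum] at hdiv
  rw [setIntegral_indicator hΩo.measurableSet,
    Set.inter_eq_self_of_subset_right hΩIcc] at hdiv
  exact hdiv
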